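/- Let a ≥ 1 be an integer and let b₁,…,b₇ be nonnegative integers. Then b₁² + ⋯ + b₇² = a² and b₁ + ⋯ + b₇ = 3a − 2 hold if and only if there is a permutation σ of {1,…,7} such that (a; b_{σ(1)},…,b_{σ(7)}) is one of the following five tuples: (1; 1,0,0,0,0,0,0), (2; 1,1,1,1,0,0,0), (3; 2,1,1,1,1,1,0), (4; 2,2,2,1,1,1,1), (5; 2,2,2,2,2,2,1). -/
import Mathlib

set_option maxHeartbeats 2000000 in
private lemma keyA (A : ℤ) (c0 c1 c2 c3 c4 c5 c6 : ℤ)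
    (h0 : 0 ≤ c0) (h1 : c0 ≤ c1) (h2 : c1 ≤ c2) (h3 : c2 ≤ c3) (h4 : c3 ≤ c4)
    (h5 : c4 ≤ c5) (h6 : c5 ≤ c6) (hc6 : c6 ≤ A) (hA : A = 1 ∨ A = 2 ∨ A = 3 ∨ A = 4 ∨ A = 5)
    (hq : c0*c0 + c1*c1 + c2*c2 + c3*c3 + c4*c4 + c5*c5 + c6*c6 = A*A)
    (hs : c0 + c1 + c2 + c3 + c4 + c5 + c6 = 3*A - 2) :
    (A = 1 ∧ c0 = 0 ∧ c1 = 0 ∧ c2 = 0 ∧ c3 = 0 ∧ c4 = 0 ∧ c5 = 0 ∧ c6 = 1) ∨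
    (A = 2 ∧ c0 = 0 ∧ c1 = 0 ∧ c2 = 0 ∧ c3 = 1 ∧ c4 = 1 ∧ c5 = 1 ∧ c6 = 1) ∨
    (A = 3 ∧ c0 = 0 ∧ c1 = 1 ∧ c2 = 1 ∧ c3 = 1 ∧ c4 = 1 ∧ c5 = 1 ∧ c6 = 2) ∨
    (A = 4 ∧ c0 = 1 ∧ c1 = 1 ∧ c2 = 1 ∧ c3 = 1 ∧ c4 = 2 ∧ c5 = 2 ∧ c6 = 2) ∨
    (A = 5 ∧ c0 = 1 ∧ c1 = 2 ∧ c2 = 2 ∧ c3 = 2 ∧ c4 = 2 ∧ c5 = 2 ∧ c6 = 2) := by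
  have g1 : 0 ≤ c1 := le_trans h0 h1
  have g2 : 0 ≤ c2 := le_trans g1 h2
  have g3 : 0 ≤ c3 := le_trans g2 h3
  have g4 : 0 ≤ c4 := le_trans g3 h4
  have g5 : 0 ≤ c5 := le_trans g4 h5
  have g6 : 0 ≤ c6 := le_trans g5 h6
  rcases hA with rfl | rfl | rfl | rfl | rfl <;>
    interval_cases c6 <;> interval_cases c5 <;> interval_cases c4 <;>
      interval_cases c3 <;> interval_cases c2 <;> interval_cases c1 <;> interval_cases c0 <;>
      omega

private lemma bound5 (a c0 c1 c2 c3 c4 c5 c6 : ℤ)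
    (hq : c0*c0 + c1*c1 + c2*c2 + c3*c3 + c4*c4 + c5*c5 + c6*c6 = a*a)
    (hs : c0 + c1 + c2 + c3 + c4 + c5 + c6 = 3*a - 2) : a ≤ 5 := by
  nlinarith [sq_nonneg (c0-c1), sq_nonneg (c0-c2), sq_nonneg (c0-c3), sq_nonneg (c0-c4),
      sq_nonneg (c0-c5), sq_nonneg (c0-c6), sq_nonneg (c1-c2), sq_nonneg (c1-c3),
      sq_nonneg (c1-c4), sq_nonneg (c1-c5), sq_nonneg (c1-c6), sq_nonneg (c2-c3),
      sq_nonneg (c2-c4), sq_nonneg (c2-c5), sq_nonneg (c2-c6), sq_nonneg (c3-c4),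
      sq_nonneg (c3-c5), sq_nonneg (c3-c6), sq_nonneg (c4-c5), sq_nonneg (c4-c6),
      sq_nonneg (c5-c6)]

private lemma boundc6 (a c0 c1 c2 c3 c4 c5 c6 : ℤ) (ha : 1 ≤ a)
    (h0 : 0 ≤ c0) (h1 : c0 ≤ c1) (h2 : c1 ≤ c2) (h3 : c2 ≤ c3) (h4 : c3 ≤ c4)
    (h5 : c4 ≤ c5) (h6 : c5 ≤ c6)
    (hq : c0*c0 + c1*c1 + c2*c2 + c3*c3 + c4*c4 + c5*c5 + c6*c6 = a*a) : c6 ≤ a := by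
  nlinarith


set_option maxHeartbeats 1000000 in
/-- Classification of Theorem 4.1: for `a ≥ 1` and nonnegative `b₁,…,b₇`, the
equations `Σ bᵢ² = a²` and `Σ bᵢ = 3a − 2` hold iff, after a permutation of the
indices, `(a; b)` is one of the five listed tuples. -/
theorem stmt_2 (a : ℤ) (b : Fin 7 → ℤ) (ha : 1 ≤ a) (hb : ∀ i, 0 ≤ b i) :
    (∑ i, (b i) ^ 2 = a ^ 2 ∧ ∑ i, b i = 3 * a - 2) ↔
      ∃ σ : Equiv.Perm (Fin 7),
        (a = 1 ∧ b ∘ ⇑σ = ![1, 0, 0, 0, 0, 0, 0]) ∨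
        (a = 2 ∧ b ∘ ⇑σ = ![1, 1, 1, 1, 0, 0, 0]) ∨
        (a = 3 ∧ b ∘ ⇑σ = ![2, 1, 1, 1, 1, 1, 0]) ∨
        (a = 4 ∧ b ∘ ⇑σ = ![2, 2, 2, 1, 1, 1, 1]) ∨
        (a = 5 ∧ b ∘ ⇑σ = ![2, 2, 2, 2, 2, 2, 1]) := by
  constructor
  · rintro ⟨hq, hs⟩
    set σ := Tuple.sort b with hσdef
    have mono := Tuple.monotone_sort b
    have m01 : b (σ 0) ≤ b (σ 1) := mono (by decide)
    have m12 : b (σ 1) ≤ b (σ 2) := mono (by decide)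
    have m23 : b (σ 2) ≤ b (σ 3) := mono (by decide)
    have m34 : b (σ 3) ≤ b (σ 4) := mono (by decide)
    have m45 : b (σ 4) ≤ b (σ 5) := mono (by decide)
    have m56 : b (σ 5) ≤ b (σ 6) := mono (by decide)
    have hqc : ∑ i, (b (σ i)) ^ 2 = a ^ 2 := by rw [← hq]; exact Equiv.sum_comp σ (fun i => b i ^ 2)
    have hsc : ∑ i, b (σ i) = 3 * a - 2 := by rw [← hs]; exact Equiv.sum_comp σ b
    rw [Fin.sum_univ_seven] at hqc hsc
    simp only [pow_two] at hqc
    have ha5 : a ≤ 5 := bound5 a _ _ _ _ _ _ _ hqc hsc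
    have hc6 : b (σ 6) ≤ a := boundc6 a _ _ _ _ _ _ _ ha (hb _) m01 m12 m23 m34 m45 m56 hqc
    have key := keyA a (b (σ 0)) (b (σ 1)) (b (σ 2)) (b (σ 3)) (b (σ 4)) (b (σ 5)) (b (σ 6))
      (hb _) m01 m12 m23 m34 m45 m56 hc6 (by omega) hqc hsc
    refine ⟨Fin.revPerm.trans σ, ?_⟩
    have hrev : ∀ i : Fin 7, (b ∘ ⇑(Fin.revPerm.trans σ)) i = b (σ i.rev) := fun i => rfl
    rcases key with ⟨ha', e0, e1, e2, e3, e4, e5, e6⟩ | ⟨ha', e0, e1, e2, e3, e4, e5, e6⟩ |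
      ⟨ha', e0, e1, e2, e3, e4, e5, e6⟩ | ⟨ha', e0, e1, e2, e3, e4, e5, e6⟩ |
      ⟨ha', e0, e1, e2, e3, e4, e5, e6⟩
    · exact Or.inl ⟨ha', funext fun i => by fin_cases i <;> simp [hrev, Fin.rev] <;>
        first | exact e0 | exact e1 | exact e2 | exact e3 | exact e4 | exact e5 | exact e6⟩
    · exact Or.inr <| Or.inl ⟨ha', funext fun i => by fin_cases i <;> simp [hrev, Fin.rev] <;>
        first | exact e0 | exact e1 | exact e2 | exact e3 | exact e4 | exact e5 | exact e6⟩
    · exact Or.inr <| Or.inr <| Or.inl ⟨ha', funext fun i => by fin_cases i <;> simp [hrev, Fin.rev] <;>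
        first | exact e0 | exact e1 | exact e2 | exact e3 | exact e4 | exact e5 | exact e6⟩
    · exact Or.inr <| Or.inr <| Or.inr <| Or.inl ⟨ha', funext fun i => by fin_cases i <;> simp [hrev, Fin.rev] <;>
        first | exact e0 | exact e1 | exact e2 | exact e3 | exact e4 | exact e5 | exact e6⟩
    · exact Or.inr <| Or.inr <| Or.inr <| Or.inr ⟨ha', funext fun i => by fin_cases i <;> simp [hrev, Fin.rev] <;>
        first | exact e0 | exact e1 | exact e2 | exact e3 | exact e4 | exact e5 | exact e6⟩
  · rintro ⟨σ, h⟩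
    have e1 : ∑ i, b i = ∑ i, (b ∘ ⇑σ) i := (Equiv.sum_comp σ b).symm
    have e2 : ∑ i, (b i) ^ 2 = ∑ i, ((b ∘ ⇑σ) i) ^ 2 :=
      (Equiv.sum_comp σ (fun i => b i ^ 2)).symm
    rcases h with ⟨rfl, h⟩ | ⟨rfl, h⟩ | ⟨rfl, h⟩ | ⟨rfl, h⟩ | ⟨rfl, h⟩ <;>
      rw [h] at e1 e2 <;>
      constructor <;> simp [Fin.sum_univ_succ] at e1 e2 ⊢ <;> omega
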